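/- Let (A_n)_{n≥1} and (B_n)_{n≥1} be sequences of complex numbers with limits A and B, let λ₁, λ₂ be the roots of λ² = Aλ + B with |λ₁| < |λ₂|, and let (a_n), (b_n) be a fundamental set of solutions of the recurrence x_{n+1} = A_n x_n + B_n x_{n−1} with a_{n+1}/a_n → λ₁ and b_{n+1}/b_n → λ₂ (terms nonzero for all large n). Then every solution of the form x_n = α a_n + β b_n with β ≠ 0 has x_n ≠ 0 for all sufficiently large n and satisfies lim_{n→∞} x_{n+1}/x_n = λ₂. -/

import Mathlib

open Filter Topology

/-- A solution of the two-term recurrence `x_{n+1} = A_n x_n + B_n x_{n-1}` (for `n ≥ 1`). -/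
def IsSolution (A B x : ℕ → ℂ) : Prop :=
  ∀ n : ℕ, 1 ≤ n → x (n + 1) = A n * x n + B n * x (n - 1)

/-- Any solution `x = α a + β b` with `β ≠ 0`, where `(a, b)` is a fundamental set of
solutions with `a_{n+1}/a_n → λ₁` and `b_{n+1}/b_n → λ₂`, is eventually nonzero and
satisfies `x_{n+1}/x_n → λ₂`. -/
theorem poincare_perron_dominant
    (A B : ℕ → ℂ) (Alim Blim : ℂ)
    (hA : Tendsto A atTop (𝓝 Alim))
    (hB : Tendsto B atTop (𝓝 Blim))
    (lam₁ lam₂ : ℂ)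
    (h₁ : lam₁ ^ 2 = Alim * lam₁ + Blim)
    (h₂ : lam₂ ^ 2 = Alim * lam₂ + Blim)
    (hmod : ‖lam₁‖ < ‖lam₂‖)
    (a b : ℕ → ℂ)
    (ha : IsSolution A B a) (hb : IsSolution A B b)
    (ha0 : ∀ᶠ n in atTop, a n ≠ 0) (hb0 : ∀ᶠ n in atTop, b n ≠ 0)
    (haratio : Tendsto (fun n => a (n + 1) / a n) atTop (𝓝 lam₁))
    (hbratio : Tendsto (fun n => b (n + 1) / b n) atTop (𝓝 lam₂))
    (α β : ℂ) (hβ : β ≠ 0)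
    (x : ℕ → ℂ) (hx : ∀ n : ℕ, x n = α * a n + β * b n) :
    (∀ᶠ n in atTop, x n ≠ 0) ∧
      Tendsto (fun n => x (n + 1) / x n) atTop (𝓝 lam₂) := by
  have hlam₂ : lam₂ ≠ 0 := by
    intro h; rw [h] at hmod; simp at hmod
    exact absurd hmod (not_lt.mpr (norm_nonneg _))
  have ha0' : ∀ᶠ n in atTop, a (n + 1) ≠ 0 := (tendsto_add_atTop_nat 1).eventually ha0
  have hb0' : ∀ᶠ n in atTop, b (n + 1) ≠ 0 := (tendsto_add_atTop_nat 1).eventually hb0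
  -- r n = a n / b n tends to 0
  set r : ℕ → ℂ := fun n => a n / b n with hr
  have hr0 : ∀ᶠ n in atTop, r n ≠ 0 := by
    filter_upwards [ha0, hb0] with n h1 h2 using div_ne_zero h1 h2
  have hratio : Tendsto (fun n => ‖r (n + 1)‖ / ‖r n‖) atTop
      (𝓝 (‖lam₁‖ / ‖lam₂‖)) := by
    have h1 : Tendsto (fun n => ‖a (n + 1) / a n‖ / ‖b (n + 1) / b n‖) atTop
        (𝓝 (‖lam₁‖ / ‖lam₂‖)) := by
      have := (haratio.norm.div hbratio.norm (by
        simpa using (norm_pos_iff.mpr hlam₂).ne'))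
      exact this
    refine h1.congr' ?_
    filter_upwards [ha0, hb0, hb0'] with n h1 h2 h3
    simp only [hr, norm_div]
    field_simp
  have hrz : Tendsto r atTop (𝓝 0) :=
    (summable_of_ratio_test_tendsto_lt_one
      ((div_lt_one (lt_of_le_of_lt (norm_nonneg _) hmod)).mpr hmod) hr0
      hratio).tendsto_atTop_zero
  -- g n = x n / b n tends to β
  set g : ℕ → ℂ := fun n => x n / b n with hg
  have hgβ : Tendsto g atTop (𝓝 β) := by
    have h1 : Tendsto (fun n => α * r n + β) atTop (𝓝 β) := by
      have := Tendsto.add (hrz.const_mul α)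
        (tendsto_const_nhds : Tendsto (fun _ : ℕ => β) atTop (𝓝 β))
      simpa using this
    refine h1.congr' ?_
    filter_upwards [hb0] with n h2
    simp only [hg, hx n, hr]
    field_simp
  have hg0 : ∀ᶠ n in atTop, g n ≠ 0 := hgβ.eventually_ne hβ
  have hx0 : ∀ᶠ n in atTop, x n ≠ 0 := by
    filter_upwards [hg0] with n h1
    intro h; apply h1; simp [hg, h]
  refine ⟨hx0, ?_⟩
  have hg' : Tendsto (fun n => g (n + 1)) atTop (𝓝 β) :=
    hgβ.comp (tendsto_add_atTop_nat 1)
  have hmain : Tendsto (fun n => g (n + 1) * (b (n + 1) / b n) / g n) atTop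
      (𝓝 (β * lam₂ / β)) := (hg'.mul hbratio).div hgβ hβ
  rw [mul_comm, mul_div_assoc, div_self hβ, mul_one] at hmain
  refine hmain.congr' ?_
  filter_upwards [hb0, hb0', hx0] with n h1 h2 h3
  simp only [hg]
  field_simp
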